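/- Let G be a linearly ordered abelian group, n ≥ 2, m ≥ 2, a ∈ G, and H a convex subgroup of G. Then a ∈ H^{[m]} if and only if n•a ∈ H^{[nm]}, where H^{[k]} = ⋂ over convex subgroups H' ⊋ H of (H' + kG). -/

import Mathlib

/-- A convex subgroup of a linearly ordered abelian group. -/
def IsConvexSubgroup {G : Type*} [AddCommGroup G] [LinearOrder G] [IsOrderedAddMonoid G] (H : AddSubgroup G) : Prop :=
  ∀ ⦃x y : G⦄, 0 ≤ x → x ≤ y → y ∈ H → x ∈ H

/-- The type of convex subgroups, ordered by inclusion. -/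
abbrev ConvexSubgroup (G : Type*) [AddCommGroup G] [LinearOrder G] [IsOrderedAddMonoid G] :=
  {H : AddSubgroup G // IsConvexSubgroup H}

/-- Membership in the set `H + nG`. -/
def memHn {G : Type*} [AddCommGroup G] (H : AddSubgroup G) (n : ℕ) (a : G) : Prop :=
  ∃ h ∈ H, ∃ x : G, a = h + n • x

/-- `IsS n a s` says that `s` (an element of the convex subgroups with a formal least
element `⊥` adjoined) is the value `𝔰ₙ(a)`: it is `⊥` if `a ∈ nG`, and otherwise it is
the largest convex subgroup `H` with `a ∉ H + nG`. -/
def IsS {G : Type*} [AddCommGroup G] [LinearOrder G] [IsOrderedAddMonoid G] (n : ℕ) (a : G)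
    (s : WithBot (ConvexSubgroup G)) : Prop :=
  ((∃ x : G, a = n • x) ∧ s = ⊥) ∨
  (¬ (∃ x : G, a = n • x) ∧ ∃ H : ConvexSubgroup G, s = ↑H ∧ ¬ memHn H.1 n a ∧
      ∀ H' : ConvexSubgroup G, ¬ memHn H'.1 n a → H' ≤ H)


lemma convex_nsmul_mem {G : Type*} [AddCommGroup G] [LinearOrder G] [IsOrderedAddMonoid G] {H : AddSubgroup G}
    (hH : IsConvexSubgroup H) {n : ℕ} (hn : 1 ≤ n) {b : G} (hb : n • b ∈ H) : b ∈ H := by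
  rcases le_total 0 b with h0 | h0
  · refine hH h0 ?_ hb
    calc b = 1 • b := (one_nsmul b).symm
    _ ≤ n • b := nsmul_le_nsmul_left h0 hn
  · have h0' : 0 ≤ -b := neg_nonneg.2 h0
    have hb' : n • (-b) ∈ H := by
      rw [smul_neg]; exact H.neg_mem hb
    have : -b ∈ H := by
      refine hH h0' ?_ hb'
      calc -b = 1 • (-b) := (one_nsmul _).symm
      _ ≤ n • (-b) := nsmul_le_nsmul_left h0' hn
    simpa using H.neg_mem this

lemma memHn_iff {G : Type*} [AddCommGroup G] [LinearOrder G] [IsOrderedAddMonoid G] {H : AddSubgroup G}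
    (hH : IsConvexSubgroup H) {n m : ℕ} (hn : 1 ≤ n) (a : G) :
    memHn H m a ↔ memHn H (n * m) (n • a) := by
  constructor
  · rintro ⟨h, hh, x, rfl⟩
    exact ⟨n • h, AddSubgroup.nsmul_mem H hh n, x, by rw [smul_add, mul_nsmul, smul_comm]⟩
  · rintro ⟨h, hh, x, hx⟩
    have key : n • (a - m • x) = h := by
      rw [smul_sub, ← mul_nsmul, mul_comm m n]
      rw [hx]; abel
    have : a - m • x ∈ H := convex_nsmul_mem hH hn (key ▸ hh)
    exact ⟨a - m • x, this, x, by abel⟩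

/-- `a ∈ H^{[m]} ↔ n•a ∈ H^{[nm]}`. -/
theorem stmt17 {G : Type*} [AddCommGroup G] [LinearOrder G] [IsOrderedAddMonoid G] (n m : ℕ) (hn : 2 ≤ n) (hm : 2 ≤ m)
    (H : ConvexSubgroup G) (a : G) :
    (∀ H' : ConvexSubgroup G, H < H' → memHn H'.1 m a) ↔
      (∀ H' : ConvexSubgroup G, H < H' → memHn H'.1 (n * m) (n • a)) := by
  constructor
  · intro h H' hlt
    exact (memHn_iff H'.2 (le_trans one_le_two hn) a).1 (h H' hlt)
  · intro h H' hlt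
    exact (memHn_iff H'.2 (le_trans one_le_two hn) a).2 (h H' hlt)
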